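/- Let G be a generic two-by-two game, and let u, v be unit quaternions with u² = v² = −1 and u·v + v·u = 0. Let μ be the mixed quantum strategy assigning probability 1/3 to each of the three points 1, u, v. Then there is no mixed quantum strategy ν such that (ν,μ) is a mixed-strategy Nash equilibrium of G^Q. -/

import Mathlib

noncomputable section

open MeasureTheory

local notation "ℍ" => Quaternion ℝ

instance : MeasurableSpace (Quaternion ℝ) := borel _
instance : BorelSpace (Quaternion ℝ) := ⟨rfl⟩

/-- The four real coordinates of a quaternion: `p = π₁(p) + π₂(p)i + π₃(p)j + π₄(p)k`. -/
def piQ (t : Fin 4) (p : ℍ) : ℝ := ![p.re, p.imI, p.imJ, p.imK] t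

/-- The standard inner product on ℍ ≅ ℝ⁴. -/
def qinner (p q : ℍ) : ℝ := ∑ t : Fin 4, piQ t p * piQ t q

/-- The quaternions `i`, `j`, `k`. -/
def qI : ℍ := ⟨0, 1, 0, 0⟩
def qJ : ℍ := ⟨0, 0, 1, 0⟩
def qK : ℍ := ⟨0, 0, 0, 1⟩

/-- A mixed quantum strategy: a Borel probability measure on the unit quaternions. -/
def IsMixed (μ : Measure ℍ) : Prop :=
  IsProbabilityMeasure μ ∧ μ {p : ℍ | ‖p‖ = 1} = 1

/-- Quantum payoff with payoff vector `X`: `P^Q(p,q) = Σ_t π_t(pq)² X_t`. -/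
def payoff (X : Fin 4 → ℝ) (p q : ℍ) : ℝ :=
  ∑ t : Fin 4, (piQ t (p * q)) ^ 2 * X t

/-- Expected payoff of a pair of mixed strategies. -/
def payoffM (X : Fin 4 → ℝ) (ν μ : Measure ℍ) : ℝ :=
  ∫ p, ∫ q, payoff X p q ∂μ ∂ν

/-- Mixed-strategy Nash equilibrium of the quantum game with payoff vectors `X`, `Y`. -/
def IsNash (X Y : Fin 4 → ℝ) (ν μ : Measure ℍ) : Prop :=
  IsMixed ν ∧ IsMixed μ ∧
    (∀ ν' : Measure ℍ, IsMixed ν' → payoffM X ν' μ ≤ payoffM X ν μ) ∧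
    (∀ μ' : Measure ℍ, IsMixed μ' → payoffM Y ν μ' ≤ payoffM Y ν μ)

/-- Equivalence of mixed quantum strategies. -/
def StratEquiv (μ μ' : Measure ℍ) : Prop :=
  ∀ p : ℍ, ‖p‖ = 1 → ∀ t : Fin 4,
    ∫ q, (piQ t (p * q)) ^ 2 ∂μ = ∫ q, (piQ t (p * q)) ^ 2 ∂μ'

/-- Equivalence of pairs of mixed strategies: `(ν,μ) ∼ (ν',μ')` iff there is a unit
quaternion `u` with `ν' ∼ ν·u` and `μ' ∼ u⁻¹·μ`. -/
def PairEquiv (ν μ ν' μ' : Measure ℍ) : Prop :=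
  ∃ u : ℍ, ‖u‖ = 1 ∧
    StratEquiv (Measure.map (fun p => p * u) ν) ν' ∧
    StratEquiv (Measure.map (fun q => u⁻¹ * q) μ) μ'

/-- A generic two-by-two game: all payoffs distinct and all pairwise sums distinct. -/
def Generic (X Y : Fin 4 → ℝ) : Prop :=
  Function.Injective X ∧ Function.Injective Y ∧
    (∀ s t s' t' : Fin 4, s < t → s' < t' → X s + X t = X s' + X t' → s = s' ∧ t = t') ∧
    (∀ s t s' t' : Fin 4, s < t → s' < t' → Y s + Y t = Y s' + Y t' → s = s' ∧ t = t')

/-- `K(p) = π₁(p)π₂(p)π₃(p)π₄(p)`. -/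
def K (p : ℍ) : ℝ := p.re * p.imI * p.imJ * p.imK

/-- Intertwined quadruple of quaternions. -/
def Intertwined (p q r s : ℍ) : Prop :=
  ∃ α : ℝ, α ≠ 0 ∧ ∀ X Y : ℝ, α * K (X • p + Y • q) = K (X • r + Y • s)

/-- Fully intertwined quadruple of quaternions. -/
def FullyIntertwined (p q r s : ℍ) : Prop :=
  Intertwined p q r s ∧ Intertwined p r q s

/-- `p` is an optimal response for Player One to the mixed strategy `μ`. -/
def Optimal₁ (X : Fin 4 → ℝ) (μ : Measure ℍ) (p : ℍ) : Prop :=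
  ‖p‖ = 1 ∧ ∀ p' : ℍ, ‖p'‖ = 1 → ∫ q, payoff X p' q ∂μ ≤ ∫ q, payoff X p q ∂μ

/-- `q` is an optimal response for Player Two to the mixed strategy `ν`. -/
def Optimal₂ (Y : Fin 4 → ℝ) (ν : Measure ℍ) (q : ℍ) : Prop :=
  ‖q‖ = 1 ∧ ∀ q' : ℍ, ‖q'‖ = 1 → ∫ p, payoff Y p q' ∂ν ≤ ∫ p, payoff Y p q ∂ν
/-! ### Auxiliary lemmas -/

lemma piQ_ext' {a b : ℍ} (h : ∀ s, piQ s a = piQ s b) : a = b := by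
  have h0 := h 0; have h1 := h 1; have h2 := h 2; have h3 := h 3
  simp only [piQ, Matrix.cons_val_zero, Matrix.cons_val_one, Matrix.head_cons,
    Matrix.cons_val_two, Matrix.tail_cons, Matrix.cons_val_three] at h0 h1 h2 h3
  ext <;> assumption

lemma piQ_smul (r : ℝ) (x : ℍ) (s : Fin 4) : piQ s (r • x) = r * piQ s x := by
  fin_cases s <;> simp [piQ]

lemma sum_piQ_sq (x : ℍ) : ∑ t : Fin 4, piQ t x ^ 2 = ‖x‖ ^ 2 := by
  have h : Quaternion.normSq x = ‖x‖ * ‖x‖ := Quaternion.normSq_eq_norm_mul_self x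
  rw [Quaternion.normSq_def'] at h
  simp only [Fin.sum_univ_four, piQ, Matrix.cons_val_zero, Matrix.cons_val_one, Matrix.head_cons,
    Matrix.cons_val_two, Matrix.tail_cons, Matrix.cons_val_three]
  nlinarith [h]

/-- The four basis quaternions. -/
def eQ : Fin 4 → ℍ := ![1, qI, qJ, qK]

lemma piQ_eQ (s t : Fin 4) : piQ s (eQ t) = if s = t then 1 else 0 := by
  fin_cases s <;> fin_cases t <;> simp [piQ, eQ, qI, qJ, qK, Quaternion.re_one, Quaternion.imI_one, Quaternion.imJ_one, Quaternion.imK_one]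

lemma norm_eq_one_of_sq {x : ℍ} (h : ‖x‖ ^ 2 = 1) : ‖x‖ = 1 := by
  nlinarith [norm_nonneg x]

lemma norm_eQ (t : Fin 4) : ‖eQ t‖ = 1 := by
  refine norm_eq_one_of_sq ?_
  rw [← sum_piQ_sq]
  fin_cases t <;> simp [piQ_eQ, Fin.sum_univ_four]

lemma parseval (p u v : ℍ) (hu0 : u.re = 0) (hv0 : v.re = 0)
    (hg1 : u.imI^2 + u.imJ^2 + u.imK^2 = 1) (hg2 : v.imI^2 + v.imJ^2 + v.imK^2 = 1)
    (hg3 : u.imI * v.imI + u.imJ * v.imJ + u.imK * v.imK = 0) (t : Fin 4) :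
    piQ t p ^ 2 + piQ t (p * u) ^ 2 + piQ t (p * v) ^ 2 + piQ t (p * (u * v)) ^ 2
      = p.re ^ 2 + p.imI ^ 2 + p.imJ ^ 2 + p.imK ^ 2 := by
  fin_cases t <;>
    simp [piQ, Quaternion.re_mul, Quaternion.imI_mul, Quaternion.imJ_mul, Quaternion.imK_mul,
      hu0, hv0]
  · linear_combination ((1) * p.re^2 * v.imI^2 + (-2) * p.imI * p.imJ * v.imI * v.imJ + (-2) * p.imI * p.imK * v.imI * v.imK + (1) * p.re^2 * v.imJ^2 + (1) * p.imI^2 * v.imJ^2 + (-1) * p.imJ^2 * v.imJ^2 + (-2) * p.imJ * p.imK * v.imJ * v.imK + (1) * p.re^2 * v.imK^2 + (1) * p.imI^2 * v.imK^2 + (-1) * p.imK^2 * v.imK^2 + (-1) * p.re^2 + (1) * p.imJ^2 + (1) * p.imK^2) * hg1 + ((-1) * p.re^2 * u.imI^2 + (-1) * p.imI^2 * u.imI^2 + (1) * p.imJ^2 * u.imI^2 + (1) * p.imK^2 * u.imI^2 + (-2) * p.imI * p.imJ * u.imI * u.imJ + (-2) * p.imI * p.imK * u.imI * u.imK + (-1)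 * p.re^2 * u.imJ^2 + (1) * p.imK^2 * u.imJ^2 + (-2) * p.imJ * p.imK * u.imJ * u.imK + (-1) * p.re^2 * u.imK^2 + (1) * p.imJ^2 * u.imK^2 + (1) * p.re^2 + (1) * p.imI^2) * hg2 + ((1) * p.re^2 * u.imI * v.imI + (1) * p.imI^2 * u.imI * v.imI + (-1) * p.imJ^2 * u.imI * v.imI + (-1) * p.imK^2 * u.imI * v.imI + (2) * p.re * p.imK * u.imI * v.imJ + (2) * p.imI * p.imJ * u.imI * v.imJ + (-2) * p.re * p.imJ * u.imI * v.imK + (2) * p.imI * p.imK * u.imI * v.imK + (-2) * p.re * p.imK * u.imJ * v.imI + (2) * p.imI * p.imJ * u.imJ * v.imI + (2) * p.re * p.imJ * u.imK * v.imI + (2) * p.imI * p.imK * u.imK * v.imI + (1) * p.re^2 * u.imJ * v.imJ + (-1) * p.imI^2 * u.imJ * v.imJ + (1) * p.imJ^2 * u.imJ * v.imJ + (-1) * p.imK^2 * u.imJ * v.imJ + (2) * p.re * p.imI * u.imJ * v.imK + (2) * p.imJ * p.imK * u.imJ * v.imK + (-2) * p.re * p.imI * u.imK * v.imJ + (2)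 * p.imJ * p.imK * u.imK * v.imJ + (1) * p.re^2 * u.imK * v.imK + (-1) * p.imI^2 * u.imK * v.imK + (-1) * p.imJ^2 * u.imK * v.imK + (1) * p.imK^2 * u.imK * v.imK) * hg3
  · linear_combination ((1) * p.imI^2 * v.imI^2 + (2) * p.re * p.imK * v.imI * v.imJ + (-2) * p.re * p.imJ * v.imI * v.imK + (1) * p.re^2 * v.imJ^2 + (1) * p.imI^2 * v.imJ^2 + (-1) * p.imK^2 * v.imJ^2 + (2) * p.imJ * p.imK * v.imJ * v.imK + (1) * p.re^2 * v.imK^2 + (1) * p.imI^2 * v.imK^2 + (-1) * p.imJ^2 * v.imK^2 + (-1) * p.imI^2 + (1) * p.imJ^2 + (1) * p.imK^2) * hg1 + ((-1) * p.re^2 * u.imI^2 + (-1) * p.imI^2 * u.imI^2 + (1) * p.imJ^2 * u.imI^2 + (1) * p.imK^2 * u.imI^2 + (2) * p.re * p.imK * u.imI * u.imJ + (-2) * p.re * p.imJ * u.imI * u.imK + (-1) * p.imI^2 * u.imJ^2 + (1) * p.imJ^2 * u.imJ^2 + (2) * p.imJ * p.imK * u.imJ * u.imK + (-1) * p.imI^2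 * u.imK^2 + (1) * p.imK^2 * u.imK^2 + (1) * p.re^2 + (1) * p.imI^2) * hg2 + ((1) * p.re^2 * u.imI * v.imI + (1) * p.imI^2 * u.imI * v.imI + (-1) * p.imJ^2 * u.imI * v.imI + (-1) * p.imK^2 * u.imI * v.imI + (-2) * p.re * p.imK * u.imI * v.imJ + (-2) * p.imI * p.imJ * u.imI * v.imJ + (2) * p.re * p.imJ * u.imI * v.imK + (-2) * p.imI * p.imK * u.imI * v.imK + (-2) * p.re * p.imK * u.imJ * v.imI + (2) * p.imI * p.imJ * u.imJ * v.imI + (2) * p.re * p.imJ * u.imK * v.imI + (2) * p.imI * p.imK * u.imK * v.imI + (-1) * p.re^2 * u.imJ * v.imJ + (1) * p.imI^2 * u.imJ * v.imJ + (-1) * p.imJ^2 * u.imJ * v.imJ + (1) * p.imK^2 * u.imJ * v.imJ + (-2) * p.re * p.imI * u.imJ * v.imK + (-2) * p.imJ * p.imK * u.imJ * v.imK + (2) * p.re * p.imI * u.imK * v.imJ + (-2) * p.imJ * p.imK * u.imK * v.imJ + (-1) * p.re^2 * u.imK * v.imK + (1) * p.imI^2 * u.imK * v.imK + (1) * p.imJ^2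 * u.imK * v.imK + (-1) * p.imK^2 * u.imK * v.imK) * hg3
  · linear_combination ((1) * p.imJ^2 * v.imI^2 + (-2) * p.re * p.imK * v.imI * v.imJ + (2) * p.imI * p.imK * v.imI * v.imK + (-1) * p.re^2 * v.imJ^2 + (1) * p.imJ^2 * v.imJ^2 + (1) * p.imK^2 * v.imJ^2 + (2) * p.re * p.imI * v.imJ * v.imK + (-1) * p.imI^2 * v.imK^2 + (1) * p.imJ^2 * v.imK^2 + (1) * p.imK^2 * v.imK^2 + (1) * p.re^2 + (1) * p.imI^2 + (-1) * p.imJ^2) * hg1 + ((1) * p.re^2 * u.imI^2 + (1) * p.imI^2 * u.imI^2 + (-1) * p.imJ^2 * u.imI^2 + (-1) * p.imK^2 * u.imI^2 + (-2) * p.re * p.imK * u.imI * u.imJ + (2) * p.imI * p.imK * u.imI * u.imK + (1) * p.imI^2 * u.imJ^2 + (-1) * p.imJ^2 * u.imJ^2 + (2) * p.re * p.imI * u.imJ * u.imK + (1) * p.re^2 * u.imK^2 + (-1) * p.imJ^2 * u.imK^2 + (1) * p.imJ^2 + (1) * p.imK^2) * hg2 + ((-1) * p.re^2 * u.imI * v.imI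 + (-1) * p.imI^2 * u.imI * v.imI + (1) * p.imJ^2 * u.imI * v.imI + (1) * p.imK^2 * u.imI * v.imI + (2) * p.re * p.imK * u.imI * v.imJ + (2) * p.imI * p.imJ * u.imI * v.imJ + (2) * p.re * p.imJ * u.imI * v.imK + (-2) * p.imI * p.imK * u.imI * v.imK + (2) * p.re * p.imK * u.imJ * v.imI + (-2) * p.imI * p.imJ * u.imJ * v.imI + (-2) * p.re * p.imJ * u.imK * v.imI + (-2) * p.imI * p.imK * u.imK * v.imI + (1) * p.re^2 * u.imJ * v.imJ + (-1) * p.imI^2 * u.imJ * v.imJ + (1) * p.imJ^2 * u.imJ * v.imJ + (-1) * p.imK^2 * u.imJ * v.imJ + (-2) * p.re * p.imI * u.imJ * v.imK + (-2) * p.imJ * p.imK * u.imJ * v.imK + (-2) * p.re * p.imI * u.imK * v.imJ + (2) * p.imJ * p.imK * u.imK * v.imJ + (-1) * p.re^2 * u.imK * v.imK + (1) * p.imI^2 * u.imK * v.imK + (1) * p.imJ^2 * u.imK * v.imK + (-1) * p.imK^2 * u.imK * v.imK) * hg3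
  · linear_combination ((1) * p.imK^2 * v.imI^2 + (2) * p.imI * p.imJ * v.imI * v.imJ + (2) * p.re * p.imJ * v.imI * v.imK + (-1) * p.imI^2 * v.imJ^2 + (1) * p.imJ^2 * v.imJ^2 + (1) * p.imK^2 * v.imJ^2 + (-2) * p.re * p.imI * v.imJ * v.imK + (-1) * p.re^2 * v.imK^2 + (1) * p.imJ^2 * v.imK^2 + (1) * p.imK^2 * v.imK^2 + (1) * p.re^2 + (1) * p.imI^2 + (-1) * p.imK^2) * hg1 + ((1) * p.re^2 * u.imI^2 + (1) * p.imI^2 * u.imI^2 + (-1) * p.imJ^2 * u.imI^2 + (-1) * p.imK^2 * u.imI^2 + (2) * p.imI * p.imJ * u.imI * u.imJ + (2) * p.re * p.imJ * u.imI * u.imK + (1) * p.re^2 * u.imJ^2 + (-1) * p.imK^2 * u.imJ^2 + (-2) * p.re * p.imI * u.imJ * u.imK + (1) * p.imI^2 * u.imK^2 + (-1) * p.imK^2 * u.imK^2 + (1) * p.imJ^2 + (1) * p.imK^2) * hg2 + ((-1) * p.re^2 * u.imI * v.imI + (-1) * p.imI^2 * u.imI * v.imI + (1) * p.imJ^2 *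 u.imI * v.imI + (1) * p.imK^2 * u.imI * v.imI + (-2) * p.re * p.imK * u.imI * v.imJ + (-2) * p.imI * p.imJ * u.imI * v.imJ + (-2) * p.re * p.imJ * u.imI * v.imK + (2) * p.imI * p.imK * u.imI * v.imK + (2) * p.re * p.imK * u.imJ * v.imI + (-2) * p.imI * p.imJ * u.imJ * v.imI + (-2) * p.re * p.imJ * u.imK * v.imI + (-2) * p.imI * p.imK * u.imK * v.imI + (-1) * p.re^2 * u.imJ * v.imJ + (1) * p.imI^2 * u.imJ * v.imJ + (-1) * p.imJ^2 * u.imJ * v.imJ + (1) * p.imK^2 * u.imJ * v.imJ + (2) * p.re * p.imI * u.imJ * v.imK + (2) * p.imJ * p.imK * u.imJ * v.imK + (2) * p.re * p.imI * u.imK * v.imJ + (-2) * p.imJ * p.imK * u.imK * v.imJ + (1) * p.re^2 * u.imK * v.imK + (-1) * p.imI^2 * u.imK * v.imK + (-1) * p.imJ^2 * u.imK * v.imK + (1) * p.imK^2 * u.imK * v.imK) * hg3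

lemma pure_of {u : ℍ} (hu : ‖u‖ = 1) (hu2 : u ^ 2 = -1) :
    u.re = 0 ∧ u.imI ^ 2 + u.imJ ^ 2 + u.imK ^ 2 = 1 := by
  have hn : u.re ^ 2 + u.imI ^ 2 + u.imJ ^ 2 + u.imK ^ 2 = 1 := by
    have h := Quaternion.normSq_eq_norm_mul_self u
    rw [Quaternion.normSq_def', hu] at h
    linarith
  have h2 := congrArg QuaternionAlgebra.re hu2
  rw [sq] at h2
  simp only [Quaternion.re_mul, Quaternion.re_neg, Quaternion.re_one] at h2
  have hre : u.re ^ 2 = 0 := by nlinarith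
  have hre' : u.re = 0 := by
    exact sq_eq_zero_iff.1 hre
  exact ⟨hre', by nlinarith⟩

lemma orth_of {u v : ℍ} (hu0 : u.re = 0) (hv0 : v.re = 0) (huv : u * v + v * u = 0) :
    u.imI * v.imI + u.imJ * v.imJ + u.imK * v.imK = 0 := by
  have h := congrArg QuaternionAlgebra.re huv
  simp only [Quaternion.re_add, Quaternion.re_mul, Quaternion.re_zero, hu0, hv0] at h
  linarith

lemma continuous_piQ (t : Fin 4) : Continuous (piQ t) := by
  fin_cases t
  · exact Quaternion.continuous_re
  · exact Quaternion.continuous_imI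
  · exact Quaternion.continuous_imJ
  · exact Quaternion.continuous_imK

lemma continuous_payoff_left (X : Fin 4 → ℝ) (q : ℍ) : Continuous fun p => payoff X p q := by
  unfold payoff
  refine continuous_finset_sum _ fun t _ => ?_
  exact (((continuous_piQ t).comp (continuous_id.mul continuous_const)).pow 2).mul
    continuous_const

lemma continuous_payoff_right (X : Fin 4 → ℝ) (p : ℍ) : Continuous fun q => payoff X p q := by
  unfold payoff
  refine continuous_finset_sum _ fun t _ => ?_
  exact (((continuous_piQ t).comp (continuous_const.mul continuous_id)).pow 2).mul
    continuous_const

lemma payoff_smul_left (X : Fin 4 → ℝ) (r : ℝ) (p q : ℍ) :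
    payoff X (r • p) q = r ^ 2 * payoff X p q := by
  unfold payoff
  rw [Finset.mul_sum]
  refine Finset.sum_congr rfl fun t _ => ?_
  rw [smul_mul_assoc, piQ_smul]; ring

lemma piQ_sq_le (t : Fin 4) (x : ℍ) : piQ t x ^ 2 ≤ ‖x‖ ^ 2 := by
  rw [← sum_piQ_sq]
  exact Finset.single_le_sum (fun s _ => sq_nonneg (piQ s x)) (Finset.mem_univ t)

lemma abs_payoff_le (X : Fin 4 → ℝ) {p : ℍ} (q : ℍ) (hp : ‖p‖ = 1) :
    |payoff X p q| ≤ ‖q‖ ^ 2 * ∑ t : Fin 4, |X t| := by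
  unfold payoff
  calc |∑ t : Fin 4, piQ t (p * q) ^ 2 * X t| ≤ ∑ t : Fin 4, |piQ t (p * q) ^ 2 * X t| :=
        Finset.abs_sum_le_sum_abs _ _
    _ ≤ ∑ t : Fin 4, ‖q‖ ^ 2 * |X t| := by
        refine Finset.sum_le_sum fun t _ => ?_
        rw [abs_mul, abs_of_nonneg (sq_nonneg _)]
        refine mul_le_mul_of_nonneg_right ?_ (abs_nonneg _)
        have := piQ_sq_le t (p * q)
        rwa [norm_mul, hp, one_mul] at this
    _ = ‖q‖ ^ 2 * ∑ t : Fin 4, |X t| := by rw [Finset.mul_sum]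

lemma payoff_ge_min (X : Fin 4 → ℝ) {t0 : Fin 4} (h : ∀ t, X t0 ≤ X t) {p q : ℍ}
    (hpq : ‖p * q‖ = 1) : X t0 ≤ payoff X p q := by
  have hs : ∑ t : Fin 4, piQ t (p * q) ^ 2 = 1 := by rw [sum_piQ_sq, hpq]; norm_num
  calc X t0 = ∑ t : Fin 4, piQ t (p * q) ^ 2 * X t0 := by rw [← Finset.sum_mul, hs, one_mul]
    _ ≤ payoff X p q :=
        Finset.sum_le_sum fun t _ => mul_le_mul_of_nonneg_left (h t) (sq_nonneg _)

lemma payoff_le_max (X : Fin 4 → ℝ) {s0 : Fin 4} (h : ∀ s, X s ≤ X s0) {p q : ℍ}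
    (hpq : ‖p * q‖ = 1) : payoff X p q ≤ X s0 := by
  have hs : ∑ t : Fin 4, piQ t (p * q) ^ 2 = 1 := by rw [sum_piQ_sq, hpq]; norm_num
  calc payoff X p q ≤ ∑ t : Fin 4, piQ t (p * q) ^ 2 * X s0 :=
        Finset.sum_le_sum fun t _ => mul_le_mul_of_nonneg_left (h t) (sq_nonneg _)
    _ = X s0 := by rw [← Finset.sum_mul, hs, one_mul]

/-- strict vertex lemma on the simplex -/
lemma vertex {Z a : Fin 4 → ℝ} {t0 : Fin 4} (ha : ∀ t, 0 ≤ a t)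
    (hsum : ∑ t : Fin 4, a t = 1) (hst : ∀ t, t ≠ t0 → Z t0 < Z t)
    (hle : ∑ t : Fin 4, a t * Z t ≤ Z t0) : ∀ t, t ≠ t0 → a t = 0 := by
  have h0 : ∑ t : Fin 4, a t * (Z t - Z t0) ≤ 0 := by
    have : ∑ t : Fin 4, a t * (Z t - Z t0)
        = (∑ t : Fin 4, a t * Z t) - (∑ t : Fin 4, a t) * Z t0 := by
      rw [Finset.sum_mul, ← Finset.sum_sub_distrib]
      exact Finset.sum_congr rfl fun t _ => by ring
    rw [this, hsum, one_mul]
    linarith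
  have hnn : ∀ t ∈ Finset.univ, 0 ≤ a t * (Z t - Z t0) := by
    intro t _
    by_cases ht : t = t0
    · subst ht; simp
    · exact mul_nonneg (ha t) (by linarith [hst t ht])
  have hz : ∑ t : Fin 4, a t * (Z t - Z t0) = 0 := le_antisymm h0 (Finset.sum_nonneg hnn)
  have hall := (Finset.sum_eq_zero_iff_of_nonneg hnn).1 hz
  intro t ht
  have := hall t (Finset.mem_univ t)
  rcases mul_eq_zero.1 this with h | h
  · exact h
  · exact absurd h (by have := hst t ht; intro hc; linarith)

lemma colinearQ {x y : ℍ} {t0 : Fin 4} (hx : ∀ t, t ≠ t0 → piQ t x = 0)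
    (hy : ∀ t, t ≠ t0 → piQ t y = 0) (hx0 : piQ t0 x ≠ 0) :
    y = (piQ t0 y / piQ t0 x) • x := by
  refine piQ_ext' fun s => ?_
  rw [piQ_smul]
  by_cases hs : s = t0
  · subst hs; field_simp
  · rw [hy s hs, hx s hs, mul_zero]

lemma integrable_dirac_cont {f : ℍ → ℝ} (hf : Continuous f) (a : ℍ) :
    Integrable f (Measure.dirac a) := by
  refine ⟨hf.aestronglyMeasurable, ?_⟩
  simp only [HasFiniteIntegral, lintegral_dirac]
  exact ENNReal.coe_lt_top

lemma integral_mu3 (x y z : ℍ) {f : ℍ → ℝ} (hf : Continuous f) :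
    ∫ q, f q ∂((3 : ENNReal)⁻¹ • Measure.dirac x + (3 : ENNReal)⁻¹ • Measure.dirac y +
      (3 : ENNReal)⁻¹ • Measure.dirac z) = (f x + f y + f z) / 3 := by
  have h3 : ((3 : ENNReal)⁻¹) ≠ ⊤ := by simp
  have hsm : ∀ a : ℍ, Integrable f ((3 : ENNReal)⁻¹ • Measure.dirac a) := fun a =>
    (integrable_dirac_cont hf a).smul_measure h3
  rw [integral_add_measure ((hsm x).add_measure (hsm y)) (hsm z),
    integral_add_measure (hsm x) (hsm y),
    integral_smul_measure, integral_smul_measure, integral_smul_measure,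
    integral_dirac, integral_dirac, integral_dirac]
  have : ((3 : ENNReal)⁻¹).toReal = 1 / 3 := by
    rw [ENNReal.toReal_inv]; norm_num
  rw [this]
  simp only [smul_eq_mul]
  ring

lemma integrable_sphere {ν : Measure ℍ} [IsProbabilityMeasure ν]
    (hae : ∀ᵐ p ∂ν, ‖p‖ = 1) {h : ℍ → ℝ} (hc : Continuous h) (C : ℝ)
    (hb : ∀ p : ℍ, ‖p‖ = 1 → |h p| ≤ C) : Integrable h ν := by
  refine (integrable_const C).mono' hc.aestronglyMeasurable ?_
  exact hae.mono fun p hp => by simpa [Real.norm_eq_abs] using hb p hp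

lemma sq_ne_zero_coord {x : ℍ} {t0 : Fin 4} (h : ∀ t, t ≠ t0 → piQ t x = 0)
    (hn : ‖x‖ = 1) : piQ t0 x ≠ 0 := by
  intro h0
  have hs : ∑ t : Fin 4, piQ t x ^ 2 = 1 := by rw [sum_piQ_sq, hn]; norm_num
  have : ∑ t : Fin 4, piQ t x ^ 2 = 0 := by
    refine Finset.sum_eq_zero fun t _ => ?_
    by_cases ht : t = t0
    · subst ht; rw [h0]; ring
    · rw [h t ht]; ring
  rw [this] at hs
  norm_num at hs

lemma vertex_max {Z a : Fin 4 → ℝ} {s0 : Fin 4} (ha : ∀ t, 0 ≤ a t)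
    (hsum : ∑ t : Fin 4, a t = 1) (hst : ∀ s, s ≠ s0 → Z s < Z s0)
    (hge : Z s0 ≤ ∑ t : Fin 4, a t * Z t) : ∀ t, t ≠ s0 → a t = 0 := by
  refine vertex (Z := fun s => -Z s) ha hsum (fun t ht => by simpa using hst t ht) ?_
  have h : ∑ t : Fin 4, a t * -Z t = -∑ t : Fin 4, a t * Z t := by
    rw [← Finset.sum_neg_distrib]
    exact Finset.sum_congr rfl fun t _ => by ring
  rw [h]
  simp only [neg_le_neg_iff]
  linarith

lemma sum_ite_sq (t0 : Fin 4) (X : Fin 4 → ℝ) :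
    ∑ t : Fin 4, (if t = t0 then (1:ℝ) else 0) ^ 2 * X t = X t0 := by
  have h : ∀ t : Fin 4, (if t = t0 then (1:ℝ) else 0) ^ 2 * X t
      = if t = t0 then X t else 0 := by
    intro t; by_cases h : t = t0 <;> simp [h]
  simp only [h]
  simp [Finset.sum_ite_eq']

/-- In a generic game, the strategy playing `1, u, v` each with
probability 1/3 is not Player Two's part of any Nash equilibrium. -/
theorem no_equilibrium_one_third (X Y : Fin 4 → ℝ) (hG : Generic X Y)
    (u v : ℍ) (hu : ‖u‖ = 1) (hv : ‖v‖ = 1)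
    (hu2 : u ^ 2 = -1) (hv2 : v ^ 2 = -1) (huv : u * v + v * u = 0) :
    ¬ ∃ ν : Measure ℍ,
        IsNash X Y ν
          ((3 : ENNReal)⁻¹ • Measure.dirac (1 : ℍ) + (3 : ENNReal)⁻¹ • Measure.dirac u +
            (3 : ENNReal)⁻¹ • Measure.dirac v) := by
  rintro ⟨ν, ⟨hνP, hνS⟩, _hμ, h1, h2⟩
  haveI : IsProbabilityMeasure ν := hνP
  obtain ⟨hu0, hg1⟩ := pure_of hu hu2
  obtain ⟨hv0, hg2⟩ := pure_of hv hv2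
  have hg3 := orth_of hu0 hv0 huv
  set w : ℍ := u * v with hwdef
  have hwn : ‖w‖ = 1 := by rw [hwdef, norm_mul, hu, hv, one_mul]
  have hw0 : w ≠ 0 := by
    intro h; rw [h, norm_zero] at hwn; norm_num at hwn
  obtain ⟨t0, -, ht0'⟩ := Finset.exists_min_image Finset.univ X ⟨0, Finset.mem_univ 0⟩
  have ht0 : ∀ t, X t0 ≤ X t := fun t => ht0' t (Finset.mem_univ t)
  have ht0s : ∀ t, t ≠ t0 → X t0 < X t := fun t ht =>
    lt_of_le_of_ne (ht0 t) fun h => ht (hG.1 h).symm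
  obtain ⟨s0, -, hs0'⟩ := Finset.exists_max_image Finset.univ Y ⟨0, Finset.mem_univ 0⟩
  have hs0 : ∀ s, Y s ≤ Y s0 := fun s => hs0' s (Finset.mem_univ s)
  have hs0s : ∀ s, s ≠ s0 → Y s < Y s0 := fun s hs =>
    lt_of_le_of_ne (hs0 s) fun h => hs (hG.2.1 h)
  set p0 : ℍ := eQ t0 * w⁻¹ with hp0def
  have hp0n : ‖p0‖ = 1 := by
    rw [hp0def, norm_mul, norm_inv, norm_eQ, hwn]; norm_num
  have hp00 : p0 ≠ 0 := by
    intro h; rw [h, norm_zero] at hp0n; norm_num at hp0n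
  have hp0w : p0 * w = eQ t0 := by
    rw [hp0def, mul_assoc, inv_mul_cancel₀ hw0, mul_one]
  set μ3 : Measure ℍ := (3 : ENNReal)⁻¹ • Measure.dirac (1 : ℍ) +
    (3 : ENNReal)⁻¹ • Measure.dirac u + (3 : ENNReal)⁻¹ • Measure.dirac v with hμ3def
  set g : ℍ → ℝ := fun p => ∫ q, payoff X p q ∂μ3 with hgdef
  have hgeq : ∀ p : ℍ, g p = (payoff X p 1 + payoff X p u + payoff X p v) / 3 := fun p =>
    integral_mu3 1 u v (continuous_payoff_right X p)
  have hkey : ∀ p : ℍ, ‖p‖ = 1 →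
      payoff X p 1 + payoff X p u + payoff X p v = (∑ t : Fin 4, X t) - payoff X p w := by
    intro p hp
    have hn : p.re ^ 2 + p.imI ^ 2 + p.imJ ^ 2 + p.imK ^ 2 = 1 := by
      have h := Quaternion.normSq_eq_norm_mul_self p
      rw [Quaternion.normSq_def', hp] at h; linarith
    unfold payoff
    simp only [mul_one]
    rw [← Finset.sum_sub_distrib, ← Finset.sum_add_distrib, ← Finset.sum_add_distrib]
    refine Finset.sum_congr rfl fun t _ => ?_
    have hpar := parseval p u v hu0 hv0 hg1 hg2 hg3 t
    rw [← hwdef] at hpar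
    linear_combination X t * hpar + X t * hn
  have hmin : payoff X p0 w = X t0 := by
    unfold payoff
    rw [hp0w]
    simp only [piQ_eQ]
    exact sum_ite_sq t0 X
  have hgmax : ∀ p : ℍ, ‖p‖ = 1 → g p ≤ g p0 := by
    intro p hp
    rw [hgeq p, hgeq p0, hkey p hp, hkey p0 hp0n, hmin]
    have h := payoff_ge_min X ht0 (q := w) (p := p) (by rw [norm_mul, hp, hwn, one_mul])
    linarith
  have hmixp0 : IsMixed (Measure.dirac p0) :=
    ⟨by infer_instance, Measure.dirac_apply_of_mem hp0n⟩
  have hN1 := h1 (Measure.dirac p0) hmixp0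
  have e1 : payoffM X (Measure.dirac p0) μ3 = g p0 := by
    unfold payoffM
    exact integral_dirac _ _
  have e2 : payoffM X ν μ3 = ∫ p, g p ∂ν := rfl
  rw [e1, e2] at hN1
  have hSm : MeasurableSet {p : ℍ | ‖p‖ = 1} :=
    (isClosed_eq continuous_norm continuous_const).measurableSet
  have hae : ∀ᵐ p ∂ν, ‖p‖ = 1 := by
    rw [ae_iff]
    have hc : {p : ℍ | ¬ ‖p‖ = 1} = {p : ℍ | ‖p‖ = 1}ᶜ := rfl
    rw [hc, measure_compl hSm (measure_ne_top ν _), hνS, measure_univ]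
    simp
  have hgc : Continuous g := by
    have h : g = fun p => (payoff X p 1 + payoff X p u + payoff X p v) / 3 := funext hgeq
    rw [h]
    exact (((continuous_payoff_left X 1).add (continuous_payoff_left X u)).add
      (continuous_payoff_left X v)).div_const 3
  have hgb : ∀ p : ℍ, ‖p‖ = 1 → |g p| ≤ ∑ t : Fin 4, |X t| := by
    intro p hp
    rw [hgeq p]
    have b1 := abs_payoff_le X (1 : ℍ) hp
    have b2 := abs_payoff_le X u hp
    have b3 := abs_payoff_le X v hp
    rw [norm_one] at b1; rw [hu] at b2; rw [hv] at b3
    norm_num at b1 b2 b3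
    rw [abs_div]
    have h3 : |(3:ℝ)| = 3 := by norm_num
    rw [h3]
    have habs := abs_add_three (payoff X p 1) (payoff X p u) (payoff X p v)
    linarith
  have hgI : Integrable g ν := integrable_sphere hae hgc _ hgb
  have hφ : ∀ᵐ p ∂ν, 0 ≤ g p0 - g p := hae.mono fun p hp => by linarith [hgmax p hp]
  have hφ' : (0 : ℍ → ℝ) ≤ᵐ[ν] fun p => g p0 - g p := hφ
  have hφI : Integrable (fun p => g p0 - g p) ν := (integrable_const _).sub hgI
  have hφint : ∫ p, (g p0 - g p) ∂ν = 0 := by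
    have hsub : ∫ p, (g p0 - g p) ∂ν = g p0 - ∫ p, g p ∂ν := by
      rw [integral_sub (integrable_const _) hgI, integral_const]
      simp [measure_univ]
    refine le_antisymm (by rw [hsub]; linarith) (integral_nonneg_of_ae hφ)
  have hgM : ∀ᵐ p ∂ν, g p = g p0 := by
    have h := (integral_eq_zero_iff_of_nonneg_ae hφ' hφI).1 hφint
    exact h.mono fun p hp => by
      have : g p0 - g p = 0 := hp
      linarith
  have hstruct : ∀ᵐ p ∂ν, ∀ q : ℍ, payoff Y p q = payoff Y p0 q := by
    filter_upwards [hae, hgM] with p hp hgp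
    have hpw : payoff X p w = X t0 := by
      have e1' := hgeq p; have e2' := hgeq p0
      rw [hkey p hp] at e1'; rw [hkey p0 hp0n, hmin] at e2'
      rw [e1', e2'] at hgp
      linarith
    have hnpw : ‖p * w‖ = 1 := by rw [norm_mul, hp, hwn, one_mul]
    have hsum1 : ∑ t : Fin 4, piQ t (p * w) ^ 2 = 1 := by
      rw [sum_piQ_sq, hnpw]; norm_num
    have hle : ∑ t : Fin 4, piQ t (p * w) ^ 2 * X t ≤ X t0 := by
      unfold payoff at hpw; exact le_of_eq hpw
    have hz : ∀ t, t ≠ t0 → piQ t (p * w) = 0 := by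
      intro t ht
      exact sq_eq_zero_iff.1
        (vertex (fun t => sq_nonneg (piQ t (p * w))) hsum1 ht0s hle t ht)
    have hx : ∀ t, t ≠ t0 → piQ t (p0 * w) = 0 := by
      intro t ht; rw [hp0w, piQ_eQ]; simp [ht]
    have hx0 : piQ t0 (p0 * w) ≠ 0 := by rw [hp0w, piQ_eQ]; simp
    have hcol := colinearQ hx hz hx0
    set r : ℝ := piQ t0 (p * w) / piQ t0 (p0 * w) with hrdef
    have hpr : p = r • p0 := by
      have h := congrArg (fun x => x * w⁻¹) hcol
      simpa [mul_assoc, mul_inv_cancel₀ hw0, smul_mul_assoc] using h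
    have hr2 : r ^ 2 = 1 := by
      have hnr := congrArg norm hpr
      rw [hp, norm_smul, Real.norm_eq_abs, hp0n, mul_one] at hnr
      rw [← sq_abs, ← hnr]; norm_num
    intro q
    rw [hpr, payoff_smul_left, hr2, one_mul]
  set f : ℍ → ℝ := fun q => payoff Y p0 q with hfdef
  have hfint : ∀ q : ℍ, ∫ p, payoff Y p q ∂ν = f q := by
    intro q
    have h : (fun p => payoff Y p q) =ᵐ[ν] fun _ => f q := hstruct.mono fun p hp => hp q
    rw [integral_congr_ae h]
    simp [measure_univ]
  have hμval : payoffM Y ν μ3 = (f 1 + f u + f v) / 3 := by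
    unfold payoffM
    have hin : ∀ p : ℍ, ∫ q, payoff Y p q ∂μ3
        = (payoff Y p 1 + payoff Y p u + payoff Y p v) / 3 :=
      fun p => integral_mu3 1 u v (continuous_payoff_right Y p)
    simp only [hin]
    have h : (fun p : ℍ => (payoff Y p 1 + payoff Y p u + payoff Y p v) / 3)
        =ᵐ[ν] fun _ => (f 1 + f u + f v) / 3 := hstruct.mono fun p hp => by
      simp only [hfdef]
      rw [hp 1, hp u, hp v]
    rw [integral_congr_ae h]
    simp [measure_univ]
  have hbr : ∀ q : ℍ, ‖q‖ = 1 → f q ≤ (f 1 + f u + f v) / 3 := by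
    intro q hq
    have hmixq : IsMixed (Measure.dirac q) := ⟨by infer_instance, Measure.dirac_apply_of_mem hq⟩
    have hN2 := h2 (Measure.dirac q) hmixq
    rw [hμval] at hN2
    have e3 : payoffM Y ν (Measure.dirac q) = f q := by
      unfold payoffM
      have hd : ∀ p : ℍ, ∫ q', payoff Y p q' ∂(Measure.dirac q) = payoff Y p q := fun p =>
        integral_dirac _ _
      simp only [hd]
      exact hfint q
    rwa [e3] at hN2
  set qstar : ℍ := p0⁻¹ * eQ s0 with hqdef
  have hqn : ‖qstar‖ = 1 := by
    rw [hqdef, norm_mul, norm_inv, hp0n, norm_eQ]; norm_num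
  have hfq : f qstar = Y s0 := by
    show payoff Y p0 qstar = Y s0
    unfold payoff
    rw [hqdef, ← mul_assoc, mul_inv_cancel₀ hp00, one_mul]
    simp only [piQ_eQ]
    exact sum_ite_sq s0 Y
  have hfle : ∀ q : ℍ, ‖q‖ = 1 → f q ≤ Y s0 := fun q hq =>
    payoff_le_max Y hs0 (by rw [norm_mul, hp0n, hq, one_mul])
  have hf1 : f 1 = Y s0 ∧ f u = Y s0 := by
    have q1 := hfle 1 norm_one
    have q2 := hfle u hu
    have q3 := hfle v hv
    have q4 := hbr qstar hqn
    rw [hfq] at q4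
    constructor <;> linarith
  have hsum1' : ∑ s : Fin 4, piQ s (p0 * 1) ^ 2 = 1 := by
    rw [sum_piQ_sq, norm_mul, hp0n, norm_one]; norm_num
  have hsumu : ∑ s : Fin 4, piQ s (p0 * u) ^ 2 = 1 := by
    rw [sum_piQ_sq, norm_mul, hp0n, hu]; norm_num
  have hge1 : Y s0 ≤ ∑ s : Fin 4, piQ s (p0 * 1) ^ 2 * Y s := by
    have h : payoff Y p0 1 = Y s0 := hf1.1
    unfold payoff at h; linarith [le_of_eq h.symm]
  have hgeu : Y s0 ≤ ∑ s : Fin 4, piQ s (p0 * u) ^ 2 * Y s := by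
    have h : payoff Y p0 u = Y s0 := hf1.2
    unfold payoff at h; linarith [le_of_eq h.symm]
  have hz1 : ∀ s, s ≠ s0 → piQ s (p0 * 1) = 0 := fun s hs =>
    sq_eq_zero_iff.1 (vertex_max (fun t => sq_nonneg _) hsum1' hs0s hge1 s hs)
  have hzu : ∀ s, s ≠ s0 → piQ s (p0 * u) = 0 := fun s hs =>
    sq_eq_zero_iff.1 (vertex_max (fun t => sq_nonneg _) hsumu hs0s hgeu s hs)
  have hx0 : piQ s0 (p0 * 1) ≠ 0 :=
    sq_ne_zero_coord hz1 (by rw [norm_mul, hp0n, norm_one]; norm_num)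
  have hcol2 := colinearQ hz1 hzu hx0
  set r2 : ℝ := piQ s0 (p0 * u) / piQ s0 (p0 * 1) with hr2def
  have h2' : p0 * u = p0 * (r2 • (1 : ℍ)) := by
    rw [mul_smul_comm]; exact hcol2
  have hu_eq : u = r2 • (1 : ℍ) := mul_left_cancel₀ hp00 h2'
  have hI : u.imI = 0 := by rw [hu_eq]; simp [Quaternion.imI_one]
  have hJ : u.imJ = 0 := by rw [hu_eq]; simp [Quaternion.imJ_one]
  have hK : u.imK = 0 := by rw [hu_eq]; simp [Quaternion.imK_one]
  rw [hI, hJ, hK] at hg1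
  norm_num at hg1
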